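/- Let n ≥ 2 be an integer, let G be a finite graph, and let U : [−1,1] → ℝ ∪ {∞} be non-increasing (U(r₁) ≥ U(r₂) whenever r₁ ≤ r₂) with U(1) < ∞ and U(r₀) < ∞ for some r₀ < 1. If σ is sampled from the spin O(n) model on G with potential U, then E(⟨σ_x, σ_y⟩) ≥ 0 for all vertices x, y ∈ V(G). -/

import Mathlib

open MeasureTheory
open scoped BigOperators

/-- The uniform probability measure on the unit sphere `S^{n-1} ⊆ ℝ^n`
(the normalized surface measure). -/
noncomputable def sphereUniform (n : ℕ) :
    Measure (Metric.sphere (0 : EuclideanSpace ℝ (Fin n)) 1) :=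
  ((volume : Measure (EuclideanSpace ℝ (Fin n))).toSphere Set.univ)⁻¹ •
    (volume : Measure (EuclideanSpace ℝ (Fin n))).toSphere

/-- The standard inner product of two points of the unit sphere of `ℝ^n`. -/
noncomputable def sdot {n : ℕ} (a b : Metric.sphere (0 : EuclideanSpace ℝ (Fin n)) 1) : ℝ :=
  inner ℝ (a : EuclideanSpace ℝ (Fin n)) (b : EuclideanSpace ℝ (Fin n))

theorem sdot_comm {n : ℕ} (a b : Metric.sphere (0 : EuclideanSpace ℝ (Fin n)) 1) :
    sdot a b = sdot b a := real_inner_comm _ _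

/-- `exp(-u)` for `u ∈ ℝ ∪ {∞}`, with the convention `exp(-∞) = 0`. -/
noncomputable def expNeg (u : WithTop ℝ) : ℝ :=
  if h : u = ⊤ then 0 else Real.exp (-(u.untop h))

/-- The Boltzmann weight `exp[-∑_{{u,v} ∈ E(G)} U(⟨σ_u, σ_v⟩)]` of a configuration `σ` for the
spin O(n) model with potential `U` on a finite graph `G`. -/
noncomputable def potentialWeight (n : ℕ) {V : Type} [Fintype V] [DecidableEq V]
    (G : SimpleGraph V) [DecidableRel G.Adj] (U : ℝ → WithTop ℝ)
    (σ : V → Metric.sphere (0 : EuclideanSpace ℝ (Fin n)) 1) : ℝ :=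
  ∏ e ∈ G.edgeFinset,
    Sym2.lift ⟨fun u v => expNeg (U (sdot (σ u) (σ v))),
      fun u v => by simp only [sdot_comm (σ u) (σ v)]⟩ e


/-! ### Auxiliary -/
open scoped ENNReal NNReal Pointwise


abbrev Sph (n : ℕ) := Metric.sphere (0 : EuclideanSpace ℝ (Fin n)) 1

lemma sph_norm {n : ℕ} (a : Sph n) : ‖(a : EuclideanSpace ℝ (Fin n))‖ = 1 :=
  mem_sphere_zero_iff_norm.mp a.2

lemma sdot_le_one {n : ℕ} (a b : Sph n) : |sdot a b| ≤ 1 := by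
  have := abs_real_inner_le_norm (a : EuclideanSpace ℝ (Fin n)) (b : EuclideanSpace ℝ (Fin n))
  simpa [sdot, sph_norm] using this

lemma expNeg_nonneg (u : WithTop ℝ) : 0 ≤ expNeg u := by
  unfold expNeg; split
  · exact le_refl _
  · exact (Real.exp_pos _).le

lemma expNeg_anti {u v : WithTop ℝ} (h : u ≤ v) : expNeg v ≤ expNeg u := by
  unfold expNeg
  split_ifs with hv hu hu
  · rfl
  · exact (Real.exp_pos _).le
  · exact absurd (top_le_iff.mp (hu ▸ h)) hv
  · apply Real.exp_le_exp.mpr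
    apply neg_le_neg
    exact_mod_cast (WithTop.untop_le_iff _).mpr (by rw [WithTop.coe_untop]; exact h)

/-! ### sphereUniform is a probability measure -/

lemma toSphere_univ_pos (n : ℕ) (hn : 1 ≤ n) :
    0 < (volume : Measure (EuclideanSpace ℝ (Fin n))).toSphere Set.univ := by
  rw [Measure.toSphere_apply_univ]
  have h1 : (0:ℝ≥0∞) < (Module.finrank ℝ (EuclideanSpace ℝ (Fin n)) : ℝ≥0∞) := by
    simp [finrank_euclideanSpace_fin]
    omega
  have h2 : (0:ℝ≥0∞) < volume (Metric.ball (0 : EuclideanSpace ℝ (Fin n)) 1) :=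
    Metric.measure_ball_pos _ _ one_pos
  exact ENNReal.mul_pos h1.ne' h2.ne'

lemma toSphere_univ_ne_top (n : ℕ) :
    (volume : Measure (EuclideanSpace ℝ (Fin n))).toSphere Set.univ ≠ ⊤ :=
  measure_ne_top _ _

lemma sphereUniform_prob (n : ℕ) (hn : 1 ≤ n) :
    IsProbabilityMeasure (sphereUniform n) := by
  constructor
  rw [sphereUniform, Measure.smul_apply, smul_eq_mul]
  exact ENNReal.inv_mul_cancel (toSphere_univ_pos n hn).ne' (toSphere_univ_ne_top n)

/-! ### Reflections of the sphere -/

/-- The linear isometry negating coordinate `i`. -/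
noncomputable def negCoord (n : ℕ) (i : Fin n) :
    EuclideanSpace ℝ (Fin n) ≃ₗᵢ[ℝ] EuclideanSpace ℝ (Fin n) :=
  LinearIsometryEquiv.piLpCongrRight 2
    (fun j => if j = i then LinearIsometryEquiv.neg ℝ else LinearIsometryEquiv.refl ℝ ℝ)

lemma negCoord_apply (n : ℕ) (i : Fin n) (x : EuclideanSpace ℝ (Fin n)) (j : Fin n) :
    negCoord n i x j = if j = i then -x j else x j := by
  simp only [negCoord, LinearIsometryEquiv.piLpCongrRight_apply]
  by_cases h : j = i
  · subst h; simp
  · simp [h]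

/-- The map of the unit sphere induced by a linear isometry equivalence. -/
noncomputable def sphLift {n : ℕ} (L : EuclideanSpace ℝ (Fin n) ≃ₗᵢ[ℝ] EuclideanSpace ℝ (Fin n))
    (a : Sph n) : Sph n :=
  ⟨L a, by
    rw [mem_sphere_zero_iff_norm, L.norm_map]
    exact sph_norm a⟩

lemma sphLift_continuous {n : ℕ} (L : EuclideanSpace ℝ (Fin n) ≃ₗᵢ[ℝ] EuclideanSpace ℝ (Fin n)) :
    Continuous (sphLift L) :=
  Continuous.subtype_mk (L.continuous.comp continuous_subtype_val) _

lemma volume_preimage_linIso {n : ℕ}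
    (L : EuclideanSpace ℝ (Fin n) ≃ₗᵢ[ℝ] EuclideanSpace ℝ (Fin n))
    (B : Set (EuclideanSpace ℝ (Fin n))) :
    volume (⇑L ⁻¹' B) = volume B := by
  have hme : (⇑(L.toHomeomorph.toMeasurableEquiv) : EuclideanSpace ℝ (Fin n) → _) = ⇑L := rfl
  calc volume (⇑L ⁻¹' B) = (Measure.map (⇑(L.toHomeomorph.toMeasurableEquiv)) volume) B := by
        rw [MeasurableEquiv.map_apply]; rfl
    _ = volume B := by rw [hme, L.measurePreserving.map_eq]

lemma ioo_smul_preimage {n : ℕ}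
    (L : EuclideanSpace ℝ (Fin n) ≃ₗᵢ[ℝ] EuclideanSpace ℝ (Fin n))
    (B : Set (EuclideanSpace ℝ (Fin n))) :
    Set.Ioo (0:ℝ) 1 • (⇑L ⁻¹' B) = ⇑L ⁻¹' (Set.Ioo (0:ℝ) 1 • B) := by
  ext z
  constructor
  · rintro ⟨r, hr, w, hw, rfl⟩
    exact ⟨r, hr, L w, hw, (L.map_smul r w).symm⟩
  · rintro ⟨r, hr, b, hb, hz⟩
    refine ⟨r, hr, L.symm b, by simpa using hb, ?_⟩
    apply L.injective
    rw [L.map_smul]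
    simpa using hz

lemma sph_preimage_val {n : ℕ}
    (L : EuclideanSpace ℝ (Fin n) ≃ₗᵢ[ℝ] EuclideanSpace ℝ (Fin n)) (s : Set (Sph n)) :
    Subtype.val '' (sphLift L ⁻¹' s) = ⇑L ⁻¹' (Subtype.val '' s) := by
  ext z
  constructor
  · rintro ⟨a, ha, rfl⟩
    exact ⟨sphLift L a, ha, rfl⟩
  · rintro ⟨b, hb, hz⟩
    have hzs : z ∈ Metric.sphere (0 : EuclideanSpace ℝ (Fin n)) 1 := by
      rw [mem_sphere_zero_iff_norm, ← L.norm_map z, ← hz]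
      exact sph_norm b
    refine ⟨⟨z, hzs⟩, ?_, rfl⟩
    show sphLift L ⟨z, hzs⟩ ∈ s
    have : sphLift L ⟨z, hzs⟩ = b := Subtype.ext hz.symm
    rw [this]; exact hb

lemma toSphere_map {n : ℕ}
    (L : EuclideanSpace ℝ (Fin n) ≃ₗᵢ[ℝ] EuclideanSpace ℝ (Fin n)) :
    Measure.map (sphLift L) (volume : Measure (EuclideanSpace ℝ (Fin n))).toSphere
      = (volume : Measure (EuclideanSpace ℝ (Fin n))).toSphere := by
  ext s hs
  rw [Measure.map_apply (sphLift_continuous L).measurable hs,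
    Measure.toSphere_apply' _ hs,
    Measure.toSphere_apply' _ (hs.preimage (sphLift_continuous L).measurable)]
  rw [sph_preimage_val, ioo_smul_preimage, volume_preimage_linIso]

lemma sphereUniform_map {n : ℕ}
    (L : EuclideanSpace ℝ (Fin n) ≃ₗᵢ[ℝ] EuclideanSpace ℝ (Fin n)) :
    MeasurePreserving (sphLift L) (sphereUniform n) (sphereUniform n) := by
  refine ⟨(sphLift_continuous L).measurable, ?_⟩
  rw [sphereUniform, Measure.map_smul, toSphere_map]

/-! ### Product measure preservation -/

lemma measurePreserving_piMap {ι : Type} [Fintype ι] {α : Type*} [MeasurableSpace α]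
    (μ : Measure α) [IsProbabilityMeasure μ] (f : ι → α → α)
    (hf : ∀ v, MeasurePreserving (f v) μ μ) :
    MeasurePreserving (fun σ : ι → α => fun v => f v (σ v))
      (Measure.pi fun _ : ι => μ) (Measure.pi fun _ : ι => μ) := by
  have hmeas : Measurable (fun σ : ι → α => fun v => f v (σ v)) :=
    measurable_pi_lambda _ fun v => (hf v).measurable.comp (measurable_pi_apply v)
  refine ⟨hmeas, ?_⟩
  refine (Measure.pi_eq fun s hs => ?_).symm
  rw [Measure.map_apply hmeas (MeasurableSet.univ_pi hs)]
  have : (fun σ : ι → α => fun v => f v (σ v)) ⁻¹' (Set.univ.pi s)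
      = Set.univ.pi (fun v => f v ⁻¹' s v) := by
    ext σ; simp [Set.mem_pi]
  rw [this, Measure.pi_pi]
  exact Finset.prod_congr rfl fun v _ =>
    ((hf v).measure_preimage (hs v).nullMeasurableSet)

/-! ### Griffiths-type combinatorial inequality -/

/-- sign of a boolean: `false ↦ 1`, `true ↦ -1`. -/
def sg (b : Bool) : ℝ := if b then -1 else 1

lemma sg_sq (b : Bool) : sg b * sg b = 1 := by cases b <;> norm_num [sg]

lemma sg_xor (a b : Bool) : sg (xor a b) = sg a * sg b := by
  cases a <;> cases b <;> norm_num [sg]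

/-- `χ_ε(e) = sg(ε u) * sg(ε v)` for `e = {u,v}`. -/
def chi {V : Type} (ε : V → Bool) (e : Sym2 V) : ℝ :=
  Sym2.lift ⟨fun u v => sg (ε u) * sg (ε v), fun u v => by ring⟩ e

lemma chi_mk {V : Type} (ε : V → Bool) (u v : V) : chi ε s(u, v) = sg (ε u) * sg (ε v) := rfl

/-- the vertex-degree increment of an edge -/
def edgeDeg {V : Type} [DecidableEq V] (e : Sym2 V) (w : V) : ℕ :=
  Sym2.lift ⟨fun u v => (if w = u then 1 else 0) + (if w = v then 1 else 0),
    fun u v => by ring⟩ e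

lemma prod_sg_pow_mul_chi {V : Type} [Fintype V] [DecidableEq V] (ε : V → Bool) (k : V → ℕ)
    (e : Sym2 V) :
    (∏ v, sg (ε v) ^ (k v)) * chi ε e = ∏ v, sg (ε v) ^ (k v + edgeDeg e v) := by
  induction e using Sym2.ind with
  | _ u v =>
    simp only [chi_mk, edgeDeg, Sym2.lift_mk]
    rw [Finset.prod_congr rfl (fun w _ => pow_add (sg (ε w)) (k w) _)]
    rw [Finset.prod_mul_distrib]
    congr 1
    rw [Finset.prod_congr rfl (fun w _ => pow_add (sg (ε w)) _ _)]
    rw [Finset.prod_mul_distrib]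
    congr 1 <;>
    · rw [Finset.prod_congr rfl (fun w _ => by rw [pow_ite, pow_one, pow_zero])]
      simp [Finset.prod_ite_eq]

lemma sum_prod_sg_pow_nonneg {V : Type} [Fintype V] [DecidableEq V] (k : V → ℕ) :
    0 ≤ ∑ ε : V → Bool, ∏ v, sg (ε v) ^ (k v) := by
  classical
  have h := Finset.prod_univ_sum (fun _ : V => (Finset.univ : Finset Bool))
    (fun v b => sg b ^ (k v))
  rw [Fintype.piFinset_univ] at h
  rw [← h]
  apply Finset.prod_nonneg
  intro v _
  rw [Fintype.sum_bool]
  cases Nat.even_or_odd (k v) with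
  | inl h => simp [sg, h.neg_one_pow]
  | inr h => simp [sg, h.neg_one_pow]

lemma griffiths_aux {V : Type} [Fintype V] [DecidableEq V] (F : Finset (Sym2 V))
    (A B : Sym2 V → ℝ) (hA : ∀ e ∈ F, 0 ≤ A e) (hB : ∀ e ∈ F, 0 ≤ B e) (k : V → ℕ) :
    0 ≤ ∑ ε : V → Bool, (∏ v, sg (ε v) ^ (k v)) * ∏ e ∈ F, (A e + B e * chi ε e) := by
  classical
  induction F using Finset.cons_induction generalizing k with
  | empty => simpa using sum_prod_sg_pow_nonneg k
  | cons e F he ih =>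
    have hsplit : ∀ ε : V → Bool,
        (∏ v, sg (ε v) ^ (k v)) * ∏ e' ∈ Finset.cons e F he, (A e' + B e' * chi ε e')
        = A e * ((∏ v, sg (ε v) ^ (k v)) * ∏ e' ∈ F, (A e' + B e' * chi ε e'))
          + B e * ((∏ v, sg (ε v) ^ (k v + edgeDeg e v)) * ∏ e' ∈ F, (A e' + B e' * chi ε e')) := by
      intro ε
      rw [Finset.prod_cons, ← prod_sg_pow_mul_chi]
      ring
    rw [Finset.sum_congr rfl fun ε _ => hsplit ε, Finset.sum_add_distrib,
      ← Finset.mul_sum, ← Finset.mul_sum]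
    have h1 := ih (fun e' he' => hA e' (Finset.mem_cons_of_mem he'))
      (fun e' he' => hB e' (Finset.mem_cons_of_mem he')) k
    have h2 := ih (fun e' he' => hA e' (Finset.mem_cons_of_mem he'))
      (fun e' he' => hB e' (Finset.mem_cons_of_mem he')) (fun v => k v + edgeDeg e v)
    have hAe := hA e (Finset.mem_cons_self e F)
    have hBe := hB e (Finset.mem_cons_self e F)
    positivity

lemma chi_eq_one_or_neg_one {V : Type} (ε : V → Bool) (e : Sym2 V) :
    chi ε e = 1 ∨ chi ε e = -1 := by
  induction e using Sym2.ind with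
  | _ u v => rw [chi_mk]; cases ε u <;> cases ε v <;> simp [sg]

lemma key_sum {V : Type} [Fintype V] [DecidableEq V] (F : Finset (Sym2 V)) (f : Sym2 V → ℝ → ℝ)
    (hf0 : ∀ e ∈ F, 0 ≤ f e (-1)) (hf1 : ∀ e ∈ F, f e (-1) ≤ f e 1) (x y : V) :
    0 ≤ ∑ ε : V → Bool, sg (ε x) * sg (ε y) * ∏ e ∈ F, f e (chi ε e) := by
  classical
  set A : Sym2 V → ℝ := fun e => (f e 1 + f e (-1)) / 2 with hA
  set B : Sym2 V → ℝ := fun e => (f e 1 - f e (-1)) / 2 with hB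
  set k : V → ℕ := fun v => (if v = x then 1 else 0) + (if v = y then 1 else 0) with hk
  have hterm : ∀ ε : V → Bool,
      sg (ε x) * sg (ε y) * ∏ e ∈ F, f e (chi ε e)
      = (∏ v, sg (ε v) ^ (k v)) * ∏ e ∈ F, (A e + B e * chi ε e) := by
    intro ε
    congr 1
    · have hprod : ∏ v, sg (ε v) ^ (k v) = sg (ε x) * sg (ε y) := by
        rw [hk]
        rw [Finset.prod_congr rfl (fun w _ => pow_add (sg (ε w)) _ _), Finset.prod_mul_distrib]
        congr 1 <;>
        · rw [Finset.prod_congr rfl (fun w _ => by rw [pow_ite, pow_one, pow_zero])]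
          simp [Finset.prod_ite_eq]
      rw [hprod]
    · refine Finset.prod_congr rfl fun e heF => ?_
      rcases chi_eq_one_or_neg_one ε e with h | h <;> rw [h] <;> simp [hA, hB] <;> ring
  rw [Finset.sum_congr rfl fun ε _ => hterm ε]
  refine griffiths_aux F A B (fun e heF => ?_) (fun e heF => ?_) k
  · have := hf0 e heF; have := hf1 e heF; simp only [hA]; linarith
  · have := hf0 e heF; have := hf1 e heF; simp only [hB]; linarith

/-! ### Coordinates -/

lemma sdot_eq_sum {n : ℕ} (a b : Sph n) :
    sdot a b = ∑ j, (a : EuclideanSpace ℝ (Fin n)) j * (b : EuclideanSpace ℝ (Fin n)) j := by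
  simp [sdot, PiLp.inner_apply, RCLike.inner_apply, mul_comm]

lemma abs_coord_le {n : ℕ} (x : EuclideanSpace ℝ (Fin n)) (i : Fin n) : |x i| ≤ ‖x‖ := by
  rw [EuclideanSpace.norm_eq, ← Real.sqrt_sq_eq_abs]
  apply Real.sqrt_le_sqrt
  have h := Finset.single_le_sum (f := fun j => ‖x j‖ ^ 2)
    (fun j _ => sq_nonneg _) (Finset.mem_univ i)
  simpa [sq_abs] using h

lemma abs_coord_le_one {n : ℕ} (a : Sph n) (i : Fin n) :
    |(a : EuclideanSpace ℝ (Fin n)) i| ≤ 1 := by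
  have := abs_coord_le (a : EuclideanSpace ℝ (Fin n)) i
  rwa [sph_norm] at this

/-! ### Spin flips -/

noncomputable def flipSpin {n : ℕ} (i : Fin n) (b : Bool) (a : Sph n) : Sph n :=
  if b then sphLift (negCoord n i) a else a

lemma flipSpin_coord {n : ℕ} (i : Fin n) (b : Bool) (a : Sph n) (j : Fin n) :
    (flipSpin i b a : EuclideanSpace ℝ (Fin n)) j
      = if j = i then sg b * (a : EuclideanSpace ℝ (Fin n)) j
        else (a : EuclideanSpace ℝ (Fin n)) j := by
  cases b with
  | false => simp [flipSpin, sg]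
  | true =>
    show (sphLift (negCoord n i) a : EuclideanSpace ℝ (Fin n)) j = _
    rw [show ((sphLift (negCoord n i) a : Sph n) : EuclideanSpace ℝ (Fin n))
        = negCoord n i (a : EuclideanSpace ℝ (Fin n)) from rfl]
    rw [negCoord_apply]
    by_cases h : j = i <;> simp [h, sg]

lemma flipSpin_coord_i {n : ℕ} (i : Fin n) (b : Bool) (a : Sph n) :
    (flipSpin i b a : EuclideanSpace ℝ (Fin n)) i
      = sg b * (a : EuclideanSpace ℝ (Fin n)) i := by
  rw [flipSpin_coord]; simp

lemma flipSpin_measurePreserving {n : ℕ} (i : Fin n) (b : Bool) :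
    MeasurePreserving (flipSpin i b) (sphereUniform n) (sphereUniform n) := by
  cases b with
  | false => exact MeasurePreserving.id _
  | true => exact sphereUniform_map (negCoord n i)

lemma sdot_flipSpin {n : ℕ} (i : Fin n) (b c : Bool) (a a' : Sph n) :
    sdot (flipSpin i b a) (flipSpin i c a')
      = (sg b * sg c) * ((a : EuclideanSpace ℝ (Fin n)) i * (a' : EuclideanSpace ℝ (Fin n)) i)
        + (sdot a a'
            - (a : EuclideanSpace ℝ (Fin n)) i * (a' : EuclideanSpace ℝ (Fin n)) i) := by
  rw [sdot_eq_sum, sdot_eq_sum]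
  rw [← Finset.sum_erase_add _ _ (Finset.mem_univ i),
      ← Finset.sum_erase_add (f := fun j => (a : EuclideanSpace ℝ (Fin n)) j
        * (a' : EuclideanSpace ℝ (Fin n)) j) _ (Finset.mem_univ i)]
  have hoff : ∀ j ∈ Finset.univ.erase i,
      (flipSpin i b a : EuclideanSpace ℝ (Fin n)) j
        * (flipSpin i c a' : EuclideanSpace ℝ (Fin n)) j
      = (a : EuclideanSpace ℝ (Fin n)) j * (a' : EuclideanSpace ℝ (Fin n)) j := by
    intro j hj
    rw [flipSpin_coord, flipSpin_coord, if_neg (Finset.mem_erase.mp hj).1,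
      if_neg (Finset.mem_erase.mp hj).1]
  rw [Finset.sum_congr rfl hoff, flipSpin_coord_i, flipSpin_coord_i]
  ring

/-! ### Measurability and bounds for the weight -/

section Weight

variable {n : ℕ} {V : Type} [Fintype V] [DecidableEq V]
  (G : SimpleGraph V) [DecidableRel G.Adj] (U : ℝ → WithTop ℝ)

lemma measurable_coord (v : V) (i : Fin n) :
    Measurable fun σ : V → Sph n => ((σ v : EuclideanSpace ℝ (Fin n)) i) :=
  (EuclideanSpace.proj i).continuous.measurable.comp
    (measurable_subtype_coe.comp (measurable_pi_apply v))

lemma measurable_sdot_apply (u v : V) :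
    Measurable fun σ : V → Sph n => sdot (σ u) (σ v) := by
  have h1 : Measurable fun σ : V → Sph n =>
      ((σ u : EuclideanSpace ℝ (Fin n)), (σ v : EuclideanSpace ℝ (Fin n))) :=
    (measurable_subtype_coe.comp (measurable_pi_apply u)).prodMk
      (measurable_subtype_coe.comp (measurable_pi_apply v))
  exact (continuous_inner (𝕜 := ℝ) (E := EuclideanSpace ℝ (Fin n))).measurable.comp h1

lemma measurable_potentialWeight (hUmeas : Measurable fun r : ℝ => expNeg (U r)) :
    Measurable (potentialWeight n G U) := by
  unfold potentialWeight
  apply Finset.measurable_prod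
  intro e he
  induction e using Sym2.ind with
  | _ u v =>
    simp only [Sym2.lift_mk]
    exact hUmeas.comp (measurable_sdot_apply u v)

lemma potentialWeight_nonneg (σ : V → Sph n) : 0 ≤ potentialWeight n G U σ := by
  apply Finset.prod_nonneg
  intro e he
  induction e using Sym2.ind with
  | _ u v => exact expNeg_nonneg _

lemma potentialWeight_le
    (hUmono : ∀ r₁ r₂ : ℝ, -1 ≤ r₁ → r₁ ≤ r₂ → r₂ ≤ 1 → U r₂ ≤ U r₁) (σ : V → Sph n) :
    potentialWeight n G U σ ≤ expNeg (U 1) ^ G.edgeFinset.card := by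
  rw [← Finset.prod_const]
  apply Finset.prod_le_prod
  · intro e he
    induction e using Sym2.ind with
    | _ u v => exact expNeg_nonneg _
  · intro e he
    induction e using Sym2.ind with
    | _ u v =>
      simp only [Sym2.lift_mk]
      apply expNeg_anti
      have h := sdot_le_one (σ u) (σ v)
      rw [abs_le] at h
      exact hUmono _ _ h.1 h.2 le_rfl

end Weight

/-! ### The pointwise inequality -/

lemma sg_not (b : Bool) : sg (!b) = -sg b := by cases b <;> simp [sg]

lemma sg_decide_abs (t : ℝ) : sg (decide (t < 0)) * t = |t| := by
  by_cases h : t < 0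
  · simp [sg, h, abs_of_neg h]
  · simp [sg, h, abs_of_nonneg (not_lt.mp h)]

section Pointwise

variable {n : ℕ} {V : Type} [Fintype V] [DecidableEq V]
  (G : SimpleGraph V) [DecidableRel G.Adj] (U : ℝ → WithTop ℝ)

lemma pointwise_key
    (hUmono : ∀ r₁ r₂ : ℝ, -1 ≤ r₁ → r₁ ≤ r₂ → r₂ ≤ 1 → U r₂ ≤ U r₁)
    (i : Fin n) (x y : V) (σ : V → Sph n) :
    0 ≤ ∑ ε : V → Bool,
      (flipSpin i (ε x) (σ x) : EuclideanSpace ℝ (Fin n)) i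
        * (flipSpin i (ε y) (σ y) : EuclideanSpace ℝ (Fin n)) i
        * potentialWeight n G U (fun v => flipSpin i (ε v) (σ v)) := by
  classical
  set s : V → Bool := fun v => decide ((σ v : EuclideanSpace ℝ (Fin n)) i < 0) with hs
  -- reindex the sum by xor with s
  have hinv : Function.Involutive (fun ε : V → Bool => fun v => xor (ε v) (s v)) := by
    intro ε; funext v; simp
  rw [← Equiv.sum_comp (Function.Involutive.toPerm _ hinv)]
  -- the `f` of key_sum
  set c : V → ℝ := fun v => |(σ v : EuclideanSpace ℝ (Fin n)) i| with hc
  set bb : V → V → ℝ := fun u v => sdot (σ u) (σ v)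
    - (σ u : EuclideanSpace ℝ (Fin n)) i * (σ v : EuclideanSpace ℝ (Fin n)) i with hbb
  have hbbcomm : ∀ u v, bb u v = bb v u := by
    intro u v; rw [hbb]; simp only; rw [sdot_comm]; ring
  set f : Sym2 V → ℝ → ℝ := fun e t =>
    Sym2.lift ⟨fun u v => expNeg (U (t * (c u * c v) + bb u v)),
      fun u v => by dsimp only; rw [hbbcomm u v, mul_comm (c u) (c v)]⟩ e with hf
  -- coordinate identity
  have hcoord : ∀ (ε : V → Bool) (v : V),
      (flipSpin i (xor (ε v) (s v)) (σ v) : EuclideanSpace ℝ (Fin n)) i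
        = sg (ε v) * c v := by
    intro ε v
    rw [flipSpin_coord_i, sg_xor, hc]
    simp only
    rw [mul_assoc, hs]
    simp only
    rw [sg_decide_abs]
  -- weight identity
  have hweight : ∀ ε : V → Bool,
      potentialWeight n G U (fun v => flipSpin i (xor (ε v) (s v)) (σ v))
        = ∏ e ∈ G.edgeFinset, f e (chi ε e) := by
    intro ε
    unfold potentialWeight
    refine Finset.prod_congr rfl fun e he => ?_
    induction e using Sym2.ind with
    | _ u v =>
      rw [hf]
      simp only [Sym2.lift_mk, chi_mk]
      congr 1
      congr 1
      rw [sdot_flipSpin, sg_xor, sg_xor]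
      have hu : sg (s u) * (σ u : EuclideanSpace ℝ (Fin n)) i = c u := by
        rw [hc, hs]; simp only; rw [sg_decide_abs]
      have hv : sg (s v) * (σ v : EuclideanSpace ℝ (Fin n)) i = c v := by
        rw [hc, hs]; simp only; rw [sg_decide_abs]
      rw [hbb]
      simp only
      rw [← hu, ← hv]
      ring
  -- rewrite each summand
  have hsummand : ∀ ε : V → Bool,
      (flipSpin i (xor (ε x) (s x)) (σ x) : EuclideanSpace ℝ (Fin n)) i
        * (flipSpin i (xor (ε y) (s y)) (σ y) : EuclideanSpace ℝ (Fin n)) i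
        * potentialWeight n G U (fun v => flipSpin i (xor (ε v) (s v)) (σ v))
      = (c x * c y) * (sg (ε x) * sg (ε y) * ∏ e ∈ G.edgeFinset, f e (chi ε e)) := by
    intro ε
    rw [hcoord ε x, hcoord ε y, hweight ε]
    ring
  calc (0:ℝ) ≤ (c x * c y) * ∑ ε : V → Bool,
        sg (ε x) * sg (ε y) * ∏ e ∈ G.edgeFinset, f e (chi ε e) := by
        apply mul_nonneg (mul_nonneg (abs_nonneg _) (abs_nonneg _))
        apply key_sum
        · intro e he
          induction e using Sym2.ind with
          | _ u v =>
            rw [hf]; simp only [Sym2.lift_mk]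
            exact expNeg_nonneg _
        · intro e he
          induction e using Sym2.ind with
          | _ u v =>
            rw [hf]
            simp only [Sym2.lift_mk]
            apply expNeg_anti
            -- -1*(c u * c v) + bb u v  and  1*(c u * c v) + bb u v are in [-1,1]
            have h1 : (1:ℝ) * (c u * c v) + bb u v
                = sdot (flipSpin i (s u) (σ u)) (flipSpin i (s v) (σ v)) := by
              rw [sdot_flipSpin]
              have hu : sg (s u) * (σ u : EuclideanSpace ℝ (Fin n)) i = c u := by
                rw [hc, hs]; simp only; rw [sg_decide_abs]
              have hv : sg (s v) * (σ v : EuclideanSpace ℝ (Fin n)) i = c v := by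
                rw [hc, hs]; simp only; rw [sg_decide_abs]
              rw [hbb]; simp only; rw [← hu, ← hv]; ring
            have h2 : (-1:ℝ) * (c u * c v) + bb u v
                = sdot (flipSpin i (!(s u)) (σ u)) (flipSpin i (s v) (σ v)) := by
              rw [sdot_flipSpin, sg_not]
              have hu : sg (s u) * (σ u : EuclideanSpace ℝ (Fin n)) i = c u := by
                rw [hc, hs]; simp only; rw [sg_decide_abs]
              have hv : sg (s v) * (σ v : EuclideanSpace ℝ (Fin n)) i = c v := by
                rw [hc, hs]; simp only; rw [sg_decide_abs]
              rw [hbb]; simp only; rw [← hu, ← hv]; ring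
            have hb1 := sdot_le_one (flipSpin i (s u) (σ u)) (flipSpin i (s v) (σ v))
            have hb2 := sdot_le_one (flipSpin i (!(s u)) (σ u)) (flipSpin i (s v) (σ v))
            rw [abs_le] at hb1 hb2
            have hcc : 0 ≤ c u * c v := mul_nonneg (abs_nonneg _) (abs_nonneg _)
            apply hUmono
            · rw [h2]; exact hb2.1
            · nlinarith
            · rw [h1]; exact hb1.2
    _ = ∑ ε : V → Bool,
        (flipSpin i (xor (ε x) (s x)) (σ x) : EuclideanSpace ℝ (Fin n)) i
          * (flipSpin i (xor (ε y) (s y)) (σ y) : EuclideanSpace ℝ (Fin n)) i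
          * potentialWeight n G U (fun v => flipSpin i (xor (ε v) (s v)) (σ v)) := by
        rw [Finset.mul_sum]
        refine Finset.sum_congr rfl fun ε _ => ?_
        exact (hsummand ε).symm
    _ = _ := rfl

end Pointwise


/-- Non-negativity of correlations for the spin O(n) model (`n ≥ 2`) with a
non-increasing potential `U : [-1,1] → ℝ ∪ {∞}`: for `σ` sampled from the spin O(n) model on a
finite graph `G` with potential `U` (`U(1) < ∞` and `U(r₀) < ∞` for some `r₀ < 1`, so the
normalizing constant is finite and positive), `E(⟨σ_x, σ_y⟩) ≥ 0` for all vertices `x, y`. -/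
theorem spin_O_n_correlation_nonneg
    (n : ℕ) (hn : 2 ≤ n)
    {V : Type} [Fintype V] [DecidableEq V]
    (G : SimpleGraph V) [DecidableRel G.Adj]
    (U : ℝ → WithTop ℝ)
    (hUmono : ∀ r₁ r₂ : ℝ, -1 ≤ r₁ → r₁ ≤ r₂ → r₂ ≤ 1 → U r₂ ≤ U r₁)
    (hU1 : U 1 ≠ ⊤)
    (hU0 : ∃ r₀ : ℝ, -1 ≤ r₀ ∧ r₀ < 1 ∧ U r₀ ≠ ⊤)
    (hUmeas : Measurable fun r : ℝ => expNeg (U r))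
    (x y : V) :
    0 ≤ (∫ σ : V → Metric.sphere (0 : EuclideanSpace ℝ (Fin n)) 1,
            sdot (σ x) (σ y) * potentialWeight n G U σ
          ∂(Measure.pi fun _ : V => sphereUniform n)) /
        (∫ σ : V → Metric.sphere (0 : EuclideanSpace ℝ (Fin n)) 1,
            potentialWeight n G U σ
          ∂(Measure.pi fun _ : V => sphereUniform n)) := by
  classical
  haveI : IsProbabilityMeasure (sphereUniform n) := sphereUniform_prob n (by omega)
  set μc : Measure (V → Sph n) := Measure.pi fun _ : V => sphereUniform n with hμc
  haveI : IsProbabilityMeasure μc := by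
    rw [hμc]; infer_instance
  set M : ℝ := expNeg (U 1) ^ G.edgeFinset.card with hM
  have hMnonneg : 0 ≤ M := pow_nonneg (expNeg_nonneg _) _
  -- integrand bound for the coordinate functions
  have hwmeas : Measurable (potentialWeight n G U) := measurable_potentialWeight G U hUmeas
  have hgmeas : ∀ (i : Fin n), Measurable (fun σ : V → Sph n =>
      (σ x : EuclideanSpace ℝ (Fin n)) i * (σ y : EuclideanSpace ℝ (Fin n)) i
        * potentialWeight n G U σ) := fun i =>
    ((measurable_coord x i).mul (measurable_coord y i)).mul hwmeas
  have hgbound : ∀ (i : Fin n) (σ : V → Sph n),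
      ‖(σ x : EuclideanSpace ℝ (Fin n)) i * (σ y : EuclideanSpace ℝ (Fin n)) i
        * potentialWeight n G U σ‖ ≤ M := by
    intro i σ
    rw [Real.norm_eq_abs, abs_mul, abs_mul]
    have h1 := abs_coord_le_one (σ x) i
    have h2 := abs_coord_le_one (σ y) i
    have h3 : |potentialWeight n G U σ| ≤ M := by
      rw [abs_of_nonneg (potentialWeight_nonneg G U σ)]
      exact potentialWeight_le G U hUmono σ
    have h0 : 0 ≤ |potentialWeight n G U σ| := abs_nonneg _
    have hab : |(σ x : EuclideanSpace ℝ (Fin n)) i| * |(σ y : EuclideanSpace ℝ (Fin n)) i| ≤ 1 :=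
      mul_le_one₀ h1 (abs_nonneg _) h2
    exact le_trans (mul_le_of_le_one_left h0 hab) h3
  have hgint : ∀ (i : Fin n), Integrable (fun σ : V → Sph n =>
      (σ x : EuclideanSpace ℝ (Fin n)) i * (σ y : EuclideanSpace ℝ (Fin n)) i
        * potentialWeight n G U σ) μc := by
    intro i
    exact (integrable_const M).mono' (hgmeas i).aestronglyMeasurable
      (Filter.Eventually.of_forall (hgbound i))
  -- nonnegativity of each coordinate integral
  have hcoordint : ∀ i : Fin n, 0 ≤ ∫ σ : V → Sph n,
      (σ x : EuclideanSpace ℝ (Fin n)) i * (σ y : EuclideanSpace ℝ (Fin n)) i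
        * potentialWeight n G U σ ∂μc := by
    intro i
    set g : (V → Sph n) → ℝ := fun σ =>
      (σ x : EuclideanSpace ℝ (Fin n)) i * (σ y : EuclideanSpace ℝ (Fin n)) i
        * potentialWeight n G U σ with hg
    have hMP : ∀ ε : V → Bool, MeasurePreserving
        (fun σ : V → Sph n => fun v => flipSpin i (ε v) (σ v)) μc μc := by
      intro ε
      exact measurePreserving_piMap (sphereUniform n) (fun v => flipSpin i (ε v))
        (fun v => flipSpin_measurePreserving i (ε v))
    have hcomp : ∀ ε : V → Bool, ∫ σ, g σ ∂μc
        = ∫ σ, g (fun v => flipSpin i (ε v) (σ v)) ∂μc := by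
      intro ε
      conv_lhs => rw [← (hMP ε).map_eq]
      exact integral_map (hMP ε).measurable.aemeasurable
        (by rw [(hMP ε).map_eq]; exact (hgmeas i).aestronglyMeasurable)
    have hcompint : ∀ ε : V → Bool,
        Integrable (fun σ => g (fun v => flipSpin i (ε v) (σ v))) μc := by
      intro ε
      exact ((hMP ε).integrable_comp (hgmeas i).aestronglyMeasurable).mpr (hgint i)
    have hcard : (0:ℝ) < (Fintype.card (V → Bool) : ℝ) := by
      exact_mod_cast Fintype.card_pos
    have hsum : (Fintype.card (V → Bool) : ℝ) * ∫ σ, g σ ∂μc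
        = ∫ σ, ∑ ε : V → Bool, g (fun v => flipSpin i (ε v) (σ v)) ∂μc := by
      rw [integral_finset_sum _ (fun ε _ => hcompint ε)]
      rw [Finset.sum_congr rfl (fun ε _ => (hcomp ε).symm)]
      rw [Finset.sum_const, Finset.card_univ, nsmul_eq_mul]
    have hptwise : ∀ σ : V → Sph n,
        0 ≤ ∑ ε : V → Bool, g (fun v => flipSpin i (ε v) (σ v)) := by
      intro σ
      exact pointwise_key G U hUmono i x y σ
    have : 0 ≤ (Fintype.card (V → Bool) : ℝ) * ∫ σ, g σ ∂μc := by
      rw [hsum]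
      exact integral_nonneg hptwise
    exact nonneg_of_mul_nonneg_right this hcard
  -- assemble
  apply div_nonneg
  · have hrw : ∀ σ : V → Sph n, sdot (σ x) (σ y) * potentialWeight n G U σ
        = ∑ i : Fin n, (σ x : EuclideanSpace ℝ (Fin n)) i
            * (σ y : EuclideanSpace ℝ (Fin n)) i * potentialWeight n G U σ := by
      intro σ
      rw [sdot_eq_sum, Finset.sum_mul]
    rw [integral_congr_ae (Filter.Eventually.of_forall hrw)]
    rw [integral_finset_sum _ (fun i _ => hgint i)]
    exact Finset.sum_nonneg fun i _ => hcoordint i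
  · exact integral_nonneg fun σ => potentialWeight_nonneg G U σ
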